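/- Let r₀ > 0, let w : [r₀,∞) → ℝ be continuously differentiable, let A : [r₀,∞) → ℝ be twice continuously differentiable with A(r₀) = 0 and A(r) > 0 for r > r₀, satisfying rA'(r) + (1 + 2w'(r)²)A(r) = 1 − (1 − w(r)²)²/r² for all r ≥ r₀ with r₀ − (1 − w(r₀)²)²/r₀ ≠ 0, and let T : (r₀,∞) → ℝ be positive and continuously differentiable satisfying 2rA(r)·(T'(r)/T(r)) = (1 − w(r)²)²/r² + (1 − 2w'(r)²)A(r) − 1 for all r > r₀. Then T'(r)/T(r) = −1/(2(r − r₀)) + O(1) as r → r₀⁺; that is, T'(r)/T(r) + 1/(2(r − r₀)) is bounded on some interval (r₀, r₀ + δ). -/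

import Mathlib

open Set Filter MeasureTheory Asymptotics Topology

set_option maxHeartbeats 2000000 in
/-- For a black hole solution of the SU(2) EYM equations with `A(r₀) = 0`,
`A > 0` on `(r₀,∞)`, the field equations `rA' + (1+2w'²)A = 1 − (1−w²)²/r²` and
`2rA(T'/T) = (1−w²)²/r² + (1−2w'²)A − 1`, and `r₀ − (1−w(r₀)²)²/r₀ ≠ 0`, the logarithmic
derivative of `T` satisfies `T'/T = −1/(2(r−r₀)) + O(1)` as `r → r₀⁺`, i.e.
`T'/T + 1/(2(r−r₀))` is bounded on some interval `(r₀, r₀+δ)`. -/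
theorem eym_T_log_derivative_horizon
    (r₀ : ℝ) (hr₀ : 0 < r₀) (w w' A A' T T' : ℝ → ℝ)
    (hw : ∀ r ∈ Ici r₀, HasDerivWithinAt w (w' r) (Ici r₀) r)
    (hw'c : ContinuousOn w' (Ici r₀))
    (hA : ∀ r ∈ Ici r₀, HasDerivWithinAt A (A' r) (Ici r₀) r)
    (hA'C1 : ContDiffOn ℝ 1 A' (Ici r₀))
    (hA0 : A r₀ = 0) (hApos : ∀ r ∈ Ioi r₀, 0 < A r)
    (heq1 : ∀ r ∈ Ici r₀,
      r * A' r + (1 + 2 * w' r ^ 2) * A r = 1 - (1 - w r ^ 2) ^ 2 / r ^ 2)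
    (hnz : r₀ - (1 - w r₀ ^ 2) ^ 2 / r₀ ≠ 0)
    (hTpos : ∀ r ∈ Ioi r₀, 0 < T r)
    (hT : ∀ r ∈ Ioi r₀, HasDerivAt T (T' r) r)
    (hT'c : ContinuousOn T' (Ioi r₀))
    (heq2 : ∀ r ∈ Ioi r₀, 2 * r * A r * (T' r / T r)
      = (1 - w r ^ 2) ^ 2 / r ^ 2 + (1 - 2 * w' r ^ 2) * A r - 1) :
    ∃ δ > 0, ∃ C : ℝ, ∀ r ∈ Ioo r₀ (r₀ + δ),
      |T' r / T r + 1 / (2 * (r - r₀))| ≤ C := by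
  -- positivity of r on Ici r₀
  have hrpos : ∀ r ∈ Ici r₀, (0:ℝ) < r := fun r hr => lt_of_lt_of_le hr₀ hr
  -- continuity facts
  have hwc : ContinuousOn w (Ici r₀) := fun r hr => (hw r hr).continuousWithinAt
  have hAc : ContinuousOn A (Ici r₀) := fun r hr => (hA r hr).continuousWithinAt
  have hA'c : ContinuousOn A' (Ici r₀) := hA'C1.continuousOn
  set A'' : ℝ → ℝ := derivWithin A' (Ici r₀) with hA''def
  have hA'' : ∀ r ∈ Ici r₀, HasDerivWithinAt A' (A'' r) (Ici r₀) r := fun r hr =>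
    ((hA'C1.differentiableOn one_ne_zero) r hr).hasDerivWithinAt
  have hA''c : ContinuousOn A'' (Ici r₀) :=
    hA'C1.continuousOn_derivWithin (uniqueDiffOn_Ici r₀) le_rfl
  -- the function f and its derivative
  set f : ℝ → ℝ := fun r => (1 - w r ^ 2) ^ 2 / r ^ 2 - 1 with hfdef
  set f' : ℝ → ℝ := fun r =>
      ((2:ℕ) * (1 - w r ^ 2) ^ 1 * -((2:ℕ) * w r ^ 1 * w' r) * r ^ 2
        - (1 - w r ^ 2) ^ 2 * ((2:ℕ) * r ^ 1 * 1)) / (r ^ 2) ^ 2 with hf'def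
  have hf : ∀ r ∈ Ici r₀, HasDerivWithinAt f (f' r) (Ici r₀) r := by
    intro r hr
    have h1 : HasDerivWithinAt (fun x => (1 - w x ^ 2) ^ 2)
        ((2:ℕ) * (1 - w r ^ 2) ^ 1 * -((2:ℕ) * w r ^ 1 * w' r)) (Ici r₀) r :=
      (((hw r hr).pow 2).const_sub 1).pow 2
    have h2 : HasDerivWithinAt (fun x : ℝ => x ^ 2) ((2:ℕ) * r ^ 1 * 1) (Ici r₀) r :=
      (hasDerivWithinAt_id r _).pow 2
    have h3 := (h1.div h2 (pow_ne_zero 2 (hrpos r hr).ne')).sub_const 1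
    exact h3
  have hfc : ContinuousOn f (Ici r₀) := fun r hr => (hf r hr).continuousWithinAt
  have hf'c : ContinuousOn f' (Ici r₀) := by
    apply ContinuousOn.div
    · apply ContinuousOn.sub
      · exact ((continuousOn_const.mul ((continuousOn_const.sub (hwc.pow 2)).pow 1)).mul
          ((continuousOn_const.mul (hwc.pow 1)).mul hw'c).neg).mul (continuousOn_pow 2)
      · exact ((continuousOn_const.sub (hwc.pow 2)).pow 2).mul
          ((continuousOn_const.mul (continuousOn_pow 1)).mul continuousOn_const)
    · exact (continuousOn_pow 2).pow 2
    · intro r hr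
      have := hrpos r hr
      positivity
  -- k and h
  set k : ℝ → ℝ := fun r => f r + A r + r * A' r with hkdef
  set k' : ℝ → ℝ := fun r => f' r + A' r + (1 * A' r + r * A'' r) with hk'def
  have hk : ∀ r ∈ Ici r₀, HasDerivWithinAt k (k' r) (Ici r₀) r := fun r hr =>
    ((hf r hr).add (hA r hr)).add ((hasDerivWithinAt_id r _).mul (hA'' r hr))
  have hk'c : ContinuousOn k' (Ici r₀) :=
    (hf'c.add hA'c).add ((continuousOn_const.mul hA'c).add (continuousOn_id.mul hA''c))
  set h : ℝ → ℝ := fun r => f r * (r - r₀) + r * A r with hhdef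
  set h' : ℝ → ℝ := fun r => f' r * (r - r₀) + f r * 1 + (1 * A r + r * A' r) with hh'def
  have hh : ∀ r ∈ Ici r₀, HasDerivWithinAt h (h' r) (Ici r₀) r := fun r hr =>
    ((hf r hr).mul ((hasDerivWithinAt_id r _).sub_const r₀)).add
      ((hasDerivWithinAt_id r _).mul (hA r hr))
  have hh'k : ∀ r, h' r = f' r * (r - r₀) + k r := by
    intro r; simp only [hh'def, hkdef]; ring
  -- values at r₀
  have heq1r₀ := heq1 r₀ (self_mem_Ici)
  rw [hA0] at heq1r₀
  have hfr₀ : f r₀ + r₀ * A' r₀ = 0 := by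
    simp only [hfdef]; nlinarith [heq1r₀]
  have hk0 : k r₀ = 0 := by
    simp only [hkdef, hA0]; linarith [hfr₀]
  have hh0 : h r₀ = 0 := by
    simp only [hhdef, hA0]; ring
  -- A' r₀ > 0
  have hA'r₀ne : A' r₀ ≠ 0 := by
    intro hcon
    rw [hcon] at heq1r₀
    apply hnz
    have hne : (r₀:ℝ) ≠ 0 := hr₀.ne'
    have h2 : (1 - w r₀ ^ 2) ^ 2 = r₀ ^ 2 := by
      field_simp at heq1r₀
      linarith
    rw [h2]
    field_simp
    ring
  have hA'r₀pos : 0 < A' r₀ := by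
    rcases lt_or_gt_of_ne hA'r₀ne with hneg | hpos
    · exfalso
      have htend : ContinuousWithinAt A' (Ici r₀) r₀ := hA'c r₀ self_mem_Ici
      have hev : ∀ᶠ x in 𝓝[≥] r₀, A' x < 0 := htend.eventually_lt continuousWithinAt_const hneg
      rcases mem_nhdsGE_iff_exists_Icc_subset.mp hev with ⟨u, hu, hsub⟩
      have hanti : AntitoneOn A (Icc r₀ u) := by
        apply antitoneOn_of_hasDerivWithinAt_nonpos (convex_Icc r₀ u)
          (hAc.mono (Icc_subset_Ici_self)) (f' := A')
        · intro x hx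
          rw [interior_Icc] at hx
          exact (hA x hx.1.le).mono
            (by rw [interior_Icc]; exact Ioo_subset_Icc_self.trans Icc_subset_Ici_self)
        · intro x hx
          rw [interior_Icc] at hx
          exact le_of_lt (hsub ⟨le_of_lt hx.1, le_of_lt hx.2⟩)
      have hmem : (r₀ + u) / 2 ∈ Icc r₀ u := ⟨by linarith, by linarith⟩
      have hle := hanti (left_mem_Icc.mpr hu.le) hmem (by linarith)
      have hgt := hApos ((r₀ + u) / 2) (by simp only [mem_Ioi]; linarith)
      rw [hA0] at hle
      linarith
    · exact hpos
  set c : ℝ := A' r₀ / 2 with hcdef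
  have hcpos : 0 < c := by positivity
  have hclt : c < A' r₀ := by rw [hcdef]; linarith
  -- interval where c < A'
  have htend : ContinuousWithinAt A' (Ici r₀) r₀ := hA'c r₀ self_mem_Ici
  have hev : ∀ᶠ x in 𝓝[≥] r₀, c < A' x :=
    continuousWithinAt_const.eventually_lt htend hclt
  rcases mem_nhdsGE_iff_exists_Icc_subset.mp hev with ⟨u, hu, hsub⟩
  set b : ℝ := min u (r₀ + 1) with hbdef
  have hbgt : r₀ < b := lt_min hu (by linarith)
  have hbIcc : Icc r₀ b ⊆ Icc r₀ u := Icc_subset_Icc_right (min_le_left _ _)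
  have hb1 : Icc r₀ b ⊆ Icc r₀ (r₀ + 1) := Icc_subset_Icc_right (min_le_right _ _)
  -- lower bound for A
  have hAlow : ∀ r ∈ Icc r₀ b, c * (r - r₀) ≤ A r := by
    have hmono : MonotoneOn (fun r => A r - c * (r - r₀)) (Icc r₀ b) := by
      apply monotoneOn_of_hasDerivWithinAt_nonneg (convex_Icc r₀ b)
        ((hAc.mono Icc_subset_Ici_self).sub (by fun_prop)) (f' := fun r => A' r - c)
      · intro x hx
        have hss : interior (Icc r₀ b) ⊆ Ici r₀ := by
          rw [interior_Icc]; exact Ioo_subset_Icc_self.trans Icc_subset_Ici_self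
        rw [interior_Icc] at hx
        have hd := ((hA x hx.1.le).mono hss).sub
          (((hasDerivWithinAt_id x _).sub_const r₀).const_mul c)
        simpa using hd
      · intro x hx
        rw [interior_Icc] at hx
        have hcc := hsub (hbIcc ⟨hx.1.le, hx.2.le⟩)
        simp only [Set.mem_setOf_eq] at hcc
        linarith
    intro r hr
    have := hmono (left_mem_Icc.mpr hbgt.le) hr hr.1
    simp only [hA0, sub_zero, zero_sub, mul_zero, sub_self] at this
    linarith
  -- bounds on the compact interval
  obtain ⟨Mw, hMw⟩ := (isCompact_Icc (a := r₀) (b := r₀ + 1)).exists_bound_of_continuousOn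
    (hw'c.mono Icc_subset_Ici_self)
  obtain ⟨Mf, hMf⟩ := (isCompact_Icc (a := r₀) (b := r₀ + 1)).exists_bound_of_continuousOn
    (hf'c.mono Icc_subset_Ici_self)
  obtain ⟨Mk, hMk⟩ := (isCompact_Icc (a := r₀) (b := r₀ + 1)).exists_bound_of_continuousOn
    (hk'c.mono Icc_subset_Ici_self)
  have hr₀mem : r₀ ∈ Icc r₀ (r₀ + 1) := ⟨le_refl _, by linarith⟩
  have hMfnn : 0 ≤ Mf := (norm_nonneg _).trans (hMf r₀ hr₀mem)
  have hMknn : 0 ≤ Mk := (norm_nonneg _).trans (hMk r₀ hr₀mem)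
  -- bound for k
  have hkbound : ∀ r ∈ Icc r₀ (r₀ + 1), |k r| ≤ Mk * (r - r₀) := by
    intro r hr
    have := norm_image_sub_le_of_norm_deriv_le_segment'
      (f := k) (f' := k') (C := Mk) (a := r₀) (b := r₀ + 1)
      (fun x hx => (hk x hx.1).mono Icc_subset_Ici_self)
      (fun x hx => hMk x ⟨hx.1, hx.2.le⟩) r hr
    rwa [hk0, sub_zero, Real.norm_eq_abs] at this
  -- quadratic bound for h
  have hhbound : ∀ r ∈ Icc r₀ (r₀ + 1), |h r| ≤ (Mf + Mk) * (r - r₀) ^ 2 := by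
    intro r hr
    have key := norm_image_sub_le_of_norm_deriv_le_segment'
      (f := h) (f' := h') (C := (Mf + Mk) * (r - r₀)) (a := r₀) (b := r)
      (fun x hx => (hh x hx.1).mono Icc_subset_Ici_self)
      (fun x hx => by
        have hx1 : x ∈ Icc r₀ (r₀ + 1) := ⟨hx.1, hx.2.le.trans hr.2⟩
        have e1 := hMf x hx1
        rw [Real.norm_eq_abs] at e1
        have e2 := hkbound x hx1
        have hxx : (0:ℝ) ≤ x - r₀ := by linarith [hx.1]
        have hxr : x - r₀ ≤ r - r₀ := by linarith [hx.2.le]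
        have e4 : |x - r₀| = x - r₀ := abs_of_nonneg hxx
        have e5 : |f' x| * (x - r₀) ≤ Mf * (r - r₀) := mul_le_mul e1 hxr hxx hMfnn
        have e6 : |k x| ≤ Mk * (r - r₀) := e2.trans (mul_le_mul_of_nonneg_left hxr hMknn)
        rw [hh'k x, Real.norm_eq_abs]
        calc |f' x * (x - r₀) + k x| ≤ |f' x * (x - r₀)| + |k x| := abs_add_le _ _
          _ = |f' x| * (x - r₀) + |k x| := by rw [abs_mul, e4]
          _ ≤ Mf * (r - r₀) + Mk * (r - r₀) := add_le_add e5 e6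
          _ = (Mf + Mk) * (r - r₀) := by ring)
      r (right_mem_Icc.mpr hr.1)
    rw [hh0, sub_zero, Real.norm_eq_abs] at key
    calc |h r| ≤ (Mf + Mk) * (r - r₀) * (r - r₀) := key
      _ = (Mf + Mk) * (r - r₀) ^ 2 := by ring
  -- final assembly
  refine ⟨b - r₀, by linarith, (Mf + Mk) / (2 * r₀ * c) + (1 + 2 * Mw ^ 2) / (2 * r₀), ?_⟩
  intro r hr
  have hr1 : r₀ < r := hr.1
  have hr2 : r < b := by have := hr.2; linarith
  have hrIcc : r ∈ Icc r₀ b := ⟨hr1.le, hr2.le⟩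
  have hrIcc1 : r ∈ Icc r₀ (r₀ + 1) := hb1 hrIcc
  have hrIoi : r ∈ Ioi r₀ := hr1
  have hrp : (0:ℝ) < r := lt_trans hr₀ hr1
  have hAr : 0 < A r := hApos r hrIoi
  have hrr : (0:ℝ) < r - r₀ := by linarith
  -- express T'/T
  have hQ := heq2 r hrIoi
  have hden : 2 * r * A r ≠ 0 := by positivity
  have key : T' r / T r = (f r + (1 - 2 * w' r ^ 2) * A r) / (2 * r * A r) := by
    rw [eq_div_iff hden]
    simp only [hfdef]
    linear_combination hQ
  have ident : T' r / T r + 1 / (2 * (r - r₀))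
      = h r / (2 * r * A r * (r - r₀)) + (1 - 2 * w' r ^ 2) / (2 * r) := by
    rw [key]
    simp only [hhdef, hfdef]
    field_simp
    ring
  rw [ident]
  have hb1r : |h r| ≤ (Mf + Mk) * (r - r₀) ^ 2 := hhbound r hrIcc1
  have hAlow' : c * (r - r₀) ≤ A r := hAlow r hrIcc
  have habs1 : |h r / (2 * r * A r * (r - r₀))| ≤ (Mf + Mk) / (2 * r₀ * c) := by
    rw [abs_div, abs_of_pos (by positivity : (0:ℝ) < 2 * r * A r * (r - r₀))]
    have hstep : r₀ * (c * (r - r₀)) ≤ r * A r :=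
      mul_le_mul hr1.le hAlow' (by positivity) hrp.le
    have hdenlow : 2 * r₀ * c * (r - r₀) ^ 2 ≤ 2 * r * A r * (r - r₀) := by
      nlinarith [mul_le_mul_of_nonneg_right hstep hrr.le]
    calc |h r| / (2 * r * A r * (r - r₀))
        ≤ ((Mf + Mk) * (r - r₀) ^ 2) / (2 * r₀ * c * (r - r₀) ^ 2) :=
          div_le_div₀ (mul_nonneg (by linarith) (sq_nonneg _)) hb1r (by positivity) hdenlow
      _ = (Mf + Mk) / (2 * r₀ * c) :=
          mul_div_mul_right _ _ (by positivity)
  have hwr := hMw r hrIcc1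
  rw [Real.norm_eq_abs] at hwr
  have hw2 : w' r ^ 2 ≤ Mw ^ 2 := by
    rw [← sq_abs]
    exact pow_le_pow_left₀ (abs_nonneg _) hwr 2
  have hnum2 : |1 - 2 * w' r ^ 2| ≤ 1 + 2 * Mw ^ 2 :=
    abs_le.mpr ⟨by nlinarith [sq_nonneg (w' r)], by nlinarith [sq_nonneg (w' r)]⟩
  have habs2 : |(1 - 2 * w' r ^ 2) / (2 * r)| ≤ (1 + 2 * Mw ^ 2) / (2 * r₀) := by
    rw [abs_div, abs_of_pos (by positivity : (0:ℝ) < 2 * r)]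
    exact div_le_div₀ (by positivity) hnum2 (by positivity) (by linarith)
  calc |h r / (2 * r * A r * (r - r₀)) + (1 - 2 * w' r ^ 2) / (2 * r)|
      ≤ |h r / (2 * r * A r * (r - r₀))| + |(1 - 2 * w' r ^ 2) / (2 * r)| := abs_add_le _ _
    _ ≤ (Mf + Mk) / (2 * r₀ * c) + (1 + 2 * Mw ^ 2) / (2 * r₀) := add_le_add habs1 habs2
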